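/- Take α = 2/Δt. Let V^h be a set of pairs (wʰ,vʰ) (wʰ : ℝ² → ℝ differentiable with ∇wʰ square-integrable on Ω and trace square-integrable on (0,1), vʰ : (0,1) → ℝ square-integrable) that is closed under addition and real scalar multiplication. Let Φ = (φ,η) and Φʰ = (φʰ,ηʰ) be pairs satisfying the same integrability conditions, with Φʰ ∈ V^h, and assume Galerkin orthogonality: B_m(Wʰ, Φ − Φʰ) = 0 for every Wʰ ∈ V^h. Then the quasi-optimality estimate |||Φ − Φʰ|||_m ≤ 2·|||Φ − Wʰ|||_m holds for every Wʰ ∈ V^h, where |||(w,v)|||²_m = ‖∇w‖²_Ω + (2/(g·Δt²))·‖w‖²_Γ + (g/2)·‖v‖²_Γ. -/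

import Mathlib

open MeasureTheory Real Set

noncomputable section

/-- The computational domain `Ω = (0,1) × (0,1) ⊂ ℝ²`. -/
def Om : Set (ℝ × ℝ) := Ioo (0:ℝ) 1 ×ˢ Ioo (0:ℝ) 1

/-- Partial derivative in the horizontal direction `x`. -/
def pdx (w : ℝ × ℝ → ℝ) (p : ℝ × ℝ) : ℝ := fderiv ℝ w p (1, 0)

/-- Partial derivative in the vertical direction `z`. -/
def pdz (w : ℝ × ℝ → ℝ) (p : ℝ × ℝ) : ℝ := fderiv ℝ w p (0, 1)

/-- Interior inner product `(∇w, ∇φ)_Ω = ∫_Ω ∇w·∇φ`. -/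
def ipOm (w φ : ℝ × ℝ → ℝ) : ℝ := ∫ p in Om, (pdx w p * pdx φ p + pdz w p * pdz φ p)

/-- Free-surface inner product `(a, b)_Γ = ∫₀¹ a(x) b(x) dx`. -/
def ipGa (a b : ℝ → ℝ) : ℝ := ∫ x in Ioo (0:ℝ) 1, a x * b x

/-- The trace of `w : ℝ² → ℝ` on the free surface `Γ` (the top edge `z = 1`). -/
def tr (w : ℝ × ℝ → ℝ) : ℝ → ℝ := fun x => w (x, 1)

/-- The gradient of `w` is square-integrable on `Ω`. -/
def GradL2 (w : ℝ × ℝ → ℝ) : Prop :=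
  MemLp (pdx w) 2 (volume.restrict Om) ∧ MemLp (pdz w) 2 (volume.restrict Om)

/-- The trace of `w` on the free surface is square-integrable on `(0,1)`. -/
def TraceL2 (w : ℝ × ℝ → ℝ) : Prop :=
  MemLp (tr w) 2 (volume.restrict (Ioo (0:ℝ) 1))

/-- A boundary function `v : (0,1) → ℝ` is square-integrable. -/
def BdryL2 (v : ℝ → ℝ) : Prop :=
  MemLp v 2 (volume.restrict (Ioo (0:ℝ) 1))

/-- The time-discrete monolithic bilinear form with parameter `α`:
`B_m(W,Φ) = (∇w,∇φ)_Ω − (2/Δt)(w,η)_Γ + (1/2)(v + (α/g)w, (2/Δt)φ + gη)_Γ`. -/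
def Bm (g Δt α : ℝ) (w : ℝ × ℝ → ℝ) (v : ℝ → ℝ) (φ : ℝ × ℝ → ℝ) (η : ℝ → ℝ) : ℝ :=
  ipOm w φ - (2 / Δt) * ipGa (tr w) η
    + (1 / 2) * ipGa (fun x => v x + (α / g) * tr w x)
        (fun x => (2 / Δt) * tr φ x + g * η x)

/-- The squared monolithic norm `|||W|||²_m = ‖∇w‖²_Ω + (2/(gΔt²))‖w‖²_Γ + (g/2)‖v‖²_Γ`. -/
def nmM2 (g Δt : ℝ) (w : ℝ × ℝ → ℝ) (v : ℝ → ℝ) : ℝ :=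
  ipOm w w + (2 / (g * Δt ^ 2)) * ipGa (tr w) (tr w) + (g / 2) * ipGa v v

/-- The regularity assumptions on a pair `W = (w,v)`: `w` differentiable with
square-integrable gradient and square-integrable trace, `v` square-integrable. -/
def Reg (W : (ℝ × ℝ → ℝ) × (ℝ → ℝ)) : Prop :=
  Differentiable ℝ W.1 ∧ GradL2 W.1 ∧ TraceL2 W.1 ∧ BdryL2 W.2

/-! ### Auxiliary lemmas -/

section Helpers

variable {α : Type*} [MeasurableSpace α] {μ : Measure α}

lemma myIntMul {f g : α → ℝ} (hf : MemLp f 2 μ) (hg : MemLp g 2 μ) :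
    Integrable (fun x => f x * g x) μ := by
  refine Integrable.mono' (hf.integrable_sq.add hg.integrable_sq) (hf.1.mul hg.1) ?_
  filter_upwards with x
  simp only [Pi.add_apply, Real.norm_eq_abs, abs_mul]
  nlinarith [sq_nonneg (|f x| - |g x|), sq_abs (f x), sq_abs (g x),
    abs_nonneg (f x), abs_nonneg (g x)]

lemma myCS {f g : α → ℝ} (hf : MemLp f 2 μ) (hg : MemLp g 2 μ) :
    ∫ x, f x * g x ∂μ ≤ Real.sqrt (∫ x, f x * f x ∂μ) * Real.sqrt (∫ x, g x * g x ∂μ) := by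
  set F : Lp ℝ 2 μ := hf.toLp f
  set G : Lp ℝ 2 μ := hg.toLp g
  have hFf : ∀ᵐ x ∂μ, F x = f x := hf.coeFn_toLp
  have hGg : ∀ᵐ x ∂μ, G x = g x := hg.coeFn_toLp
  have hip : ∀ (A B : Lp ℝ 2 μ), (inner ℝ A B : ℝ) = ∫ x, A x * B x ∂μ := by
    intro A B
    rw [L2.inner_def]
    simp [RCLike.inner_apply, mul_comm]
  have h1 : ∫ x, f x * g x ∂μ = (inner ℝ F G : ℝ) := by
    rw [hip]; exact integral_congr_ae (by filter_upwards [hFf, hGg] with x h1 h2; rw [h1, h2])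
  have h2 : ∫ x, f x * f x ∂μ = ‖F‖ ^ 2 := by
    rw [← real_inner_self_eq_norm_sq, hip]
    exact integral_congr_ae (by filter_upwards [hFf] with x h1; rw [h1])
  have h3 : ∫ x, g x * g x ∂μ = ‖G‖ ^ 2 := by
    rw [← real_inner_self_eq_norm_sq, hip]
    exact integral_congr_ae (by filter_upwards [hGg] with x h1; rw [h1])
  rw [h1, h2, h3, Real.sqrt_sq (norm_nonneg _), Real.sqrt_sq (norm_nonneg _)]
  exact real_inner_le_norm F G

end Helpers

section Scalar

/-- 2D Cauchy–Schwarz for nonnegative reals. -/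
lemma cs2 {x1 x2 y1 y2 : ℝ} (hx1 : 0 ≤ x1) (hx2 : 0 ≤ x2) (hy1 : 0 ≤ y1) (hy2 : 0 ≤ y2) :
    x1 * y1 + x2 * y2 ≤ Real.sqrt (x1 ^ 2 + x2 ^ 2) * Real.sqrt (y1 ^ 2 + y2 ^ 2) := by
  have hs : Real.sqrt (x1 ^ 2 + x2 ^ 2) ^ 2 = x1 ^ 2 + x2 ^ 2 :=
    Real.sq_sqrt (by positivity)
  have ht : Real.sqrt (y1 ^ 2 + y2 ^ 2) ^ 2 = y1 ^ 2 + y2 ^ 2 :=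
    Real.sq_sqrt (by positivity)
  have hs0 : 0 ≤ Real.sqrt (x1 ^ 2 + x2 ^ 2) := Real.sqrt_nonneg _
  have ht0 : 0 ≤ Real.sqrt (y1 ^ 2 + y2 ^ 2) := Real.sqrt_nonneg _
  nlinarith [sq_nonneg (x1 * y2 - x2 * y1), mul_nonneg hs0 ht0,
    mul_nonneg (mul_nonneg hx1 hy1) (mul_nonneg hx2 hy2), sq_nonneg (x1*y1 + x2*y2)]

/-- 3D Cauchy–Schwarz for nonnegative reals. -/
lemma cs3 {x1 x2 x3 y1 y2 y3 : ℝ} (hx1 : 0 ≤ x1) (hx2 : 0 ≤ x2) (hx3 : 0 ≤ x3)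
    (hy1 : 0 ≤ y1) (hy2 : 0 ≤ y2) (hy3 : 0 ≤ y3) :
    x1 * y1 + x2 * y2 + x3 * y3 ≤
      Real.sqrt (x1 ^ 2 + x2 ^ 2 + x3 ^ 2) * Real.sqrt (y1 ^ 2 + y2 ^ 2 + y3 ^ 2) := by
  have hs : Real.sqrt (x1 ^ 2 + x2 ^ 2 + x3 ^ 2) ^ 2 = x1 ^ 2 + x2 ^ 2 + x3 ^ 2 :=
    Real.sq_sqrt (by positivity)
  have ht : Real.sqrt (y1 ^ 2 + y2 ^ 2 + y3 ^ 2) ^ 2 = y1 ^ 2 + y2 ^ 2 + y3 ^ 2 :=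
    Real.sq_sqrt (by positivity)
  have hs0 : 0 ≤ Real.sqrt (x1 ^ 2 + x2 ^ 2 + x3 ^ 2) := Real.sqrt_nonneg _
  have ht0 : 0 ≤ Real.sqrt (y1 ^ 2 + y2 ^ 2 + y3 ^ 2) := Real.sqrt_nonneg _
  nlinarith [sq_nonneg (x1 * y2 - x2 * y1), sq_nonneg (x1 * y3 - x3 * y1),
    sq_nonneg (x2 * y3 - x3 * y2), mul_nonneg hs0 ht0,
    mul_nonneg (mul_nonneg hx1 hy1) (mul_nonneg hx2 hy2),
    mul_nonneg (mul_nonneg hx1 hy1) (mul_nonneg hx3 hy3),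
    mul_nonneg (mul_nonneg hx2 hy2) (mul_nonneg hx3 hy3),
    sq_nonneg (x1*y1 + x2*y2 + x3*y3)]

/-- The combined scalar bound giving constant 2. -/
lemma scalarBound {a1 a2 a3 b1 b2 b3 : ℝ} (ha1 : 0 ≤ a1) (ha2 : 0 ≤ a2) (ha3 : 0 ≤ a3)
    (hb1 : 0 ≤ b1) (hb2 : 0 ≤ b2) (hb3 : 0 ≤ b3) :
    a1 * b1 + a2 * b2 + a3 * b3 + a3 * b2 + a2 * b3 ≤
      2 * Real.sqrt (a1 ^ 2 + a2 ^ 2 + a3 ^ 2) * Real.sqrt (b1 ^ 2 + b2 ^ 2 + b3 ^ 2) := by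
  have h1 := cs3 ha1 ha2 ha3 hb1 hb2 hb3
  have h2 : a3 * b2 + a2 * b3 ≤
      Real.sqrt (a3 ^ 2 + a2 ^ 2) * Real.sqrt (b2 ^ 2 + b3 ^ 2) := cs2 ha3 ha2 hb2 hb3
  have h3 : Real.sqrt (a3 ^ 2 + a2 ^ 2) ≤ Real.sqrt (a1 ^ 2 + a2 ^ 2 + a3 ^ 2) :=
    Real.sqrt_le_sqrt (by nlinarith)
  have h4 : Real.sqrt (b2 ^ 2 + b3 ^ 2) ≤ Real.sqrt (b1 ^ 2 + b2 ^ 2 + b3 ^ 2) :=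
    Real.sqrt_le_sqrt (by nlinarith)
  have h5 : Real.sqrt (a3 ^ 2 + a2 ^ 2) * Real.sqrt (b2 ^ 2 + b3 ^ 2) ≤
      Real.sqrt (a1 ^ 2 + a2 ^ 2 + a3 ^ 2) * Real.sqrt (b1 ^ 2 + b2 ^ 2 + b3 ^ 2) :=
    mul_le_mul h3 h4 (Real.sqrt_nonneg _) (Real.sqrt_nonneg _)
  linarith

end Scalar

section Forms

lemma ipGa_comm (a b : ℝ → ℝ) : ipGa a b = ipGa b a := by
  simp [ipGa, mul_comm]

lemma ipGa_self_nonneg (a : ℝ → ℝ) : 0 ≤ ipGa a a :=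
  integral_nonneg fun x => mul_self_nonneg _

lemma ipOm_self_nonneg (w : ℝ × ℝ → ℝ) : 0 ≤ ipOm w w :=
  integral_nonneg fun p => add_nonneg (mul_self_nonneg _) (mul_self_nonneg _)

lemma nmM2_nonneg {g Δt : ℝ} (hg : 0 < g) (hΔt : 0 < Δt) (w : ℝ × ℝ → ℝ) (v : ℝ → ℝ) :
    0 ≤ nmM2 g Δt w v := by
  have h1 := ipOm_self_nonneg w
  have h2 := ipGa_self_nonneg (tr w)
  have h3 := ipGa_self_nonneg v
  have c1 : (0:ℝ) ≤ 2 / (g * Δt ^ 2) := by positivity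
  have c2 : (0:ℝ) ≤ g / 2 := by positivity
  unfold nmM2
  nlinarith [mul_nonneg c1 h2, mul_nonneg c2 h3]

lemma ipGa_cs {a b : ℝ → ℝ} (ha : BdryL2 a) (hb : BdryL2 b) :
    ipGa a b ≤ Real.sqrt (ipGa a a) * Real.sqrt (ipGa b b) :=
  myCS ha hb

lemma ipGa_cs_neg {a b : ℝ → ℝ} (ha : BdryL2 a) (hb : BdryL2 b) :
    -ipGa a b ≤ Real.sqrt (ipGa a a) * Real.sqrt (ipGa b b) := by
  have hna : BdryL2 (fun x => -a x) := ha.neg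
  have h := myCS hna hb
  have e1 : ∫ x in Ioo (0:ℝ) 1, -a x * b x = -ipGa a b := by
    simp [ipGa, neg_mul, integral_neg]
  have e2 : ∫ x in Ioo (0:ℝ) 1, -a x * -a x = ipGa a a := by
    simp [ipGa]
  rw [e1, e2] at h
  exact h

lemma ipGa_add_left {a b c : ℝ → ℝ} (ha : BdryL2 a) (hb : BdryL2 b) (hc : BdryL2 c) :
    ipGa (fun x => a x + b x) c = ipGa a c + ipGa b c := by
  unfold ipGa
  rw [← integral_add (myIntMul ha hc) (myIntMul hb hc)]
  congr 1; funext x; ring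

lemma ipOm_cs {w φ : ℝ × ℝ → ℝ} (hw : GradL2 w) (hφ : GradL2 φ) :
    ipOm w φ ≤ Real.sqrt (ipOm w w) * Real.sqrt (ipOm φ φ) := by
  obtain ⟨hwx, hwz⟩ := hw
  obtain ⟨hφx, hφz⟩ := hφ
  have ewφ : ipOm w φ
      = (∫ p in Om, pdx w p * pdx φ p) + ∫ p in Om, pdz w p * pdz φ p :=
    integral_add (myIntMul hwx hφx) (myIntMul hwz hφz)
  have eww : ipOm w w
      = (∫ p in Om, pdx w p * pdx w p) + ∫ p in Om, pdz w p * pdz w p :=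
    integral_add (myIntMul hwx hwx) (myIntMul hwz hwz)
  have eφφ : ipOm φ φ
      = (∫ p in Om, pdx φ p * pdx φ p) + ∫ p in Om, pdz φ p * pdz φ p :=
    integral_add (myIntMul hφx hφx) (myIntMul hφz hφz)
  set x1 := Real.sqrt (∫ p in Om, pdx w p * pdx w p) with hx1
  set x2 := Real.sqrt (∫ p in Om, pdz w p * pdz w p) with hx2
  set y1 := Real.sqrt (∫ p in Om, pdx φ p * pdx φ p) with hy1
  set y2 := Real.sqrt (∫ p in Om, pdz φ p * pdz φ p) with hy2
  have t1 : (∫ p in Om, pdx w p * pdx φ p) ≤ x1 * y1 := myCS hwx hφx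
  have t2 : (∫ p in Om, pdz w p * pdz φ p) ≤ x2 * y2 := myCS hwz hφz
  have hx1' : x1 ^ 2 = ∫ p in Om, pdx w p * pdx w p :=
    Real.sq_sqrt (integral_nonneg fun p => mul_self_nonneg _)
  have hx2' : x2 ^ 2 = ∫ p in Om, pdz w p * pdz w p :=
    Real.sq_sqrt (integral_nonneg fun p => mul_self_nonneg _)
  have hy1' : y1 ^ 2 = ∫ p in Om, pdx φ p * pdx φ p :=
    Real.sq_sqrt (integral_nonneg fun p => mul_self_nonneg _)
  have hy2' : y2 ^ 2 = ∫ p in Om, pdz φ p * pdz φ p :=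
    Real.sq_sqrt (integral_nonneg fun p => mul_self_nonneg _)
  have hww : ipOm w w = x1 ^ 2 + x2 ^ 2 := by rw [eww, hx1', hx2']
  have hφφ : ipOm φ φ = y1 ^ 2 + y2 ^ 2 := by rw [eφφ, hy1', hy2']
  have h := cs2 (Real.sqrt_nonneg _ : 0 ≤ x1) (Real.sqrt_nonneg _ : 0 ≤ x2)
    (Real.sqrt_nonneg _ : 0 ≤ y1) (Real.sqrt_nonneg _ : 0 ≤ y2)
  rw [ewφ, hww, hφφ]
  linarith

lemma pdx_add {w1 w2 : ℝ × ℝ → ℝ} (h1 : Differentiable ℝ w1) (h2 : Differentiable ℝ w2) :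
    pdx (w1 + w2) = fun p => pdx w1 p + pdx w2 p := by
  funext p
  unfold pdx
  rw [show w1 + w2 = fun q => w1 q + w2 q from rfl, fderiv_fun_add (h1 p) (h2 p)]
  rfl

lemma pdz_add {w1 w2 : ℝ × ℝ → ℝ} (h1 : Differentiable ℝ w1) (h2 : Differentiable ℝ w2) :
    pdz (w1 + w2) = fun p => pdz w1 p + pdz w2 p := by
  funext p
  unfold pdz
  rw [show w1 + w2 = fun q => w1 q + w2 q from rfl, fderiv_fun_add (h1 p) (h2 p)]
  rfl

lemma pdx_sub {w1 w2 : ℝ × ℝ → ℝ} (h1 : Differentiable ℝ w1) (h2 : Differentiable ℝ w2) :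
    pdx (w1 - w2) = fun p => pdx w1 p - pdx w2 p := by
  funext p
  unfold pdx
  rw [show w1 - w2 = fun q => w1 q - w2 q from rfl, fderiv_fun_sub (h1 p) (h2 p)]
  rfl

lemma pdz_sub {w1 w2 : ℝ × ℝ → ℝ} (h1 : Differentiable ℝ w1) (h2 : Differentiable ℝ w2) :
    pdz (w1 - w2) = fun p => pdz w1 p - pdz w2 p := by
  funext p
  unfold pdz
  rw [show w1 - w2 = fun q => w1 q - w2 q from rfl, fderiv_fun_sub (h1 p) (h2 p)]
  rfl

lemma gradL2_sub {w1 w2 : ℝ × ℝ → ℝ} (h1 : Differentiable ℝ w1) (h2 : Differentiable ℝ w2)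
    (g1 : GradL2 w1) (g2 : GradL2 w2) : GradL2 (w1 - w2) := by
  constructor
  · rw [pdx_sub h1 h2]; exact g1.1.sub g2.1
  · rw [pdz_sub h1 h2]; exact g1.2.sub g2.2

lemma traceL2_sub {w1 w2 : ℝ × ℝ → ℝ} (h1 : TraceL2 w1) (h2 : TraceL2 w2) :
    TraceL2 (w1 - w2) := by
  have e : tr (w1 - w2) = fun x => tr w1 x - tr w2 x := rfl
  rw [TraceL2, e]
  exact h1.sub h2

lemma ipOm_add_left {w1 w2 φ : ℝ × ℝ → ℝ} (h1 : Differentiable ℝ w1)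
    (h2 : Differentiable ℝ w2) (g1 : GradL2 w1) (g2 : GradL2 w2) (gφ : GradL2 φ) :
    ipOm (w1 + w2) φ = ipOm w1 φ + ipOm w2 φ := by
  unfold ipOm
  rw [pdx_add h1 h2, pdz_add h1 h2]
  have I1 : Integrable (fun p : ℝ × ℝ => pdx w1 p * pdx φ p + pdz w1 p * pdz φ p)
      (volume.restrict Om) := (myIntMul g1.1 gφ.1).add (myIntMul g1.2 gφ.2)
  have I2 : Integrable (fun p : ℝ × ℝ => pdx w2 p * pdx φ p + pdz w2 p * pdz φ p)
      (volume.restrict Om) := (myIntMul g2.1 gφ.1).add (myIntMul g2.2 gφ.2)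
  rw [← integral_add I1 I2]
  congr 1; funext p; ring

/-- Expansion of the bilinear form for `α = 2/Δt`. -/
lemma bm_expand {g Δt : ℝ} (hg : g ≠ 0) (hΔt : Δt ≠ 0) {w φ : ℝ × ℝ → ℝ} {v η : ℝ → ℝ}
    (hw : TraceL2 w) (hv : BdryL2 v) (hφ : TraceL2 φ) (hη : BdryL2 η) :
    Bm g Δt (2 / Δt) w v φ η
      = ipOm w φ + (2 / (g * Δt ^ 2)) * ipGa (tr w) (tr φ)
        + (g / 2) * ipGa v η + (1 / Δt) * ipGa v (tr φ) - (1 / Δt) * ipGa (tr w) η := by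
  have i1 : Integrable (fun x => v x * tr φ x) (volume.restrict (Ioo (0:ℝ) 1)) := myIntMul hv hφ
  have i2 : Integrable (fun x => v x * η x) (volume.restrict (Ioo (0:ℝ) 1)) := myIntMul hv hη
  have i3 : Integrable (fun x => tr w x * tr φ x) (volume.restrict (Ioo (0:ℝ) 1)) :=
    myIntMul hw hφ
  have i4 : Integrable (fun x => tr w x * η x) (volume.restrict (Ioo (0:ℝ) 1)) := myIntMul hw hη
  have key : ipGa (fun x => v x + (2 / Δt / g) * tr w x)
      (fun x => (2 / Δt) * tr φ x + g * η x)
      = (2 / Δt) * ipGa v (tr φ) + g * ipGa v η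
        + ((2 / Δt / g) * (2 / Δt)) * ipGa (tr w) (tr φ)
        + ((2 / Δt / g) * g) * ipGa (tr w) η := by
    unfold ipGa
    rw [show (fun x => (v x + (2 / Δt / g) * tr w x) * ((2 / Δt) * tr φ x + g * η x))
        = fun x => ((2 / Δt) * (v x * tr φ x) + g * (v x * η x))
          + (((2 / Δt / g) * (2 / Δt)) * (tr w x * tr φ x)
            + ((2 / Δt / g) * g) * (tr w x * η x)) from funext fun x => by ring]
    have j1 : Integrable (fun x => (2 / Δt) * (v x * tr φ x) + g * (v x * η x))
        (volume.restrict (Ioo (0:ℝ) 1)) := (i1.const_mul _).add (i2.const_mul _)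
    have j2 : Integrable (fun x => ((2 / Δt / g) * (2 / Δt)) * (tr w x * tr φ x)
          + ((2 / Δt / g) * g) * (tr w x * η x))
        (volume.restrict (Ioo (0:ℝ) 1)) := (i3.const_mul _).add (i4.const_mul _)
    rw [integral_add j1 j2,
      integral_add (i1.const_mul _) (i2.const_mul _),
      integral_add (i3.const_mul _) (i4.const_mul _),
      integral_const_mul, integral_const_mul, integral_const_mul, integral_const_mul]
    ring
  unfold Bm
  rw [key]
  field_simp
  ring

/-- Coercivity: `B_m(W,W) = |||W|||²` for `α = 2/Δt`. -/
lemma bm_coercive {g Δt : ℝ} (hg : g ≠ 0) (hΔt : Δt ≠ 0) {w : ℝ × ℝ → ℝ} {v : ℝ → ℝ}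
    (hw : TraceL2 w) (hv : BdryL2 v) :
    Bm g Δt (2 / Δt) w v w v = nmM2 g Δt w v := by
  rw [bm_expand hg hΔt hw hv hw hv, ipGa_comm v (tr w)]
  unfold nmM2
  ring

/-- Boundedness with constant 2: `B_m(W,Φ) ≤ 2 |||W||| |||Φ|||` for `α = 2/Δt`. -/
lemma bm_bound {g Δt : ℝ} (hg : 0 < g) (hΔt : 0 < Δt) {w φ : ℝ × ℝ → ℝ} {v η : ℝ → ℝ}
    (hwG : GradL2 w) (hw : TraceL2 w) (hv : BdryL2 v)
    (hφG : GradL2 φ) (hφ : TraceL2 φ) (hη : BdryL2 η) :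
    Bm g Δt (2 / Δt) w v φ η
      ≤ 2 * Real.sqrt (nmM2 g Δt w v) * Real.sqrt (nmM2 g Δt φ η) := by
  rw [bm_expand hg.ne' hΔt.ne' hw hv hφ hη]
  set c : ℝ := 2 / (g * Δt ^ 2) with hc
  set d : ℝ := g / 2 with hd
  have hc0 : 0 < c := by rw [hc]; positivity
  have hd0 : 0 < d := by rw [hd]; positivity
  set a1 := Real.sqrt (ipOm w w) with ha1
  set a2 := Real.sqrt (ipGa (tr w) (tr w)) with ha2
  set a3 := Real.sqrt (ipGa v v) with ha3
  set b1 := Real.sqrt (ipOm φ φ) with hb1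
  set b2 := Real.sqrt (ipGa (tr φ) (tr φ)) with hb2
  set b3 := Real.sqrt (ipGa η η) with hb3
  have ha10 : 0 ≤ a1 := Real.sqrt_nonneg _
  have ha20 : 0 ≤ a2 := Real.sqrt_nonneg _
  have ha30 : 0 ≤ a3 := Real.sqrt_nonneg _
  have hb10 : 0 ≤ b1 := Real.sqrt_nonneg _
  have hb20 : 0 ≤ b2 := Real.sqrt_nonneg _
  have hb30 : 0 ≤ b3 := Real.sqrt_nonneg _
  have t1 : ipOm w φ ≤ a1 * b1 := ipOm_cs hwG hφG
  have t2 : ipGa (tr w) (tr φ) ≤ a2 * b2 := ipGa_cs hw hφ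
  have t3 : ipGa v η ≤ a3 * b3 := ipGa_cs hv hη
  have t4 : ipGa v (tr φ) ≤ a3 * b2 := ipGa_cs hv hφ
  have t5 : -ipGa (tr w) η ≤ a2 * b3 := ipGa_cs_neg hw hη
  have ec : Real.sqrt c * Real.sqrt c = c := Real.mul_self_sqrt hc0.le
  have ed : Real.sqrt d * Real.sqrt d = d := Real.mul_self_sqrt hd0.le
  have ecd : Real.sqrt c * Real.sqrt d = 1 / Δt := by
    rw [← Real.sqrt_mul hc0.le]
    rw [show c * d = (1 / Δt) ^ 2 by rw [hc, hd]; field_simp]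
    exact Real.sqrt_sq (by positivity)
  have main := scalarBound ha10 (mul_nonneg (Real.sqrt_nonneg c) ha20)
    (mul_nonneg (Real.sqrt_nonneg d) ha30) hb10
    (mul_nonneg (Real.sqrt_nonneg c) hb20) (mul_nonneg (Real.sqrt_nonneg d) hb30)
  have eA : a1 ^ 2 + (Real.sqrt c * a2) ^ 2 + (Real.sqrt d * a3) ^ 2 = nmM2 g Δt w v := by
    rw [nmM2]
    rw [mul_pow, mul_pow, ha1, ha2, ha3,
      Real.sq_sqrt (ipOm_self_nonneg w), Real.sq_sqrt (ipGa_self_nonneg (tr w)),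
      Real.sq_sqrt (ipGa_self_nonneg v),
      Real.sq_sqrt hc0.le, Real.sq_sqrt hd0.le]
  have eB : b1 ^ 2 + (Real.sqrt c * b2) ^ 2 + (Real.sqrt d * b3) ^ 2 = nmM2 g Δt φ η := by
    rw [nmM2]
    rw [mul_pow, mul_pow, hb1, hb2, hb3,
      Real.sq_sqrt (ipOm_self_nonneg φ), Real.sq_sqrt (ipGa_self_nonneg (tr φ)),
      Real.sq_sqrt (ipGa_self_nonneg η),
      Real.sq_sqrt hc0.le, Real.sq_sqrt hd0.le]
  rw [eA, eB] at main
  have k1 : (Real.sqrt c * a2) * (Real.sqrt c * b2) = c * (a2 * b2) := by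
    rw [show (Real.sqrt c * a2) * (Real.sqrt c * b2)
      = (Real.sqrt c * Real.sqrt c) * (a2 * b2) by ring, ec]
  have k2 : (Real.sqrt d * a3) * (Real.sqrt d * b3) = d * (a3 * b3) := by
    rw [show (Real.sqrt d * a3) * (Real.sqrt d * b3)
      = (Real.sqrt d * Real.sqrt d) * (a3 * b3) by ring, ed]
  have k3 : (Real.sqrt d * a3) * (Real.sqrt c * b2) = (1 / Δt) * (a3 * b2) := by
    rw [show (Real.sqrt d * a3) * (Real.sqrt c * b2)
      = (Real.sqrt c * Real.sqrt d) * (a3 * b2) by ring, ecd]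
  have k4 : (Real.sqrt c * a2) * (Real.sqrt d * b3) = (1 / Δt) * (a2 * b3) := by
    rw [show (Real.sqrt c * a2) * (Real.sqrt d * b3)
      = (Real.sqrt c * Real.sqrt d) * (a2 * b3) by ring, ecd]
  rw [k1, k2, k3, k4] at main
  have hΔt0 : (0:ℝ) ≤ 1 / Δt := by positivity
  have s2 : c * ipGa (tr w) (tr φ) ≤ c * (a2 * b2) :=
    mul_le_mul_of_nonneg_left t2 hc0.le
  have s3 : d * ipGa v η ≤ d * (a3 * b3) := mul_le_mul_of_nonneg_left t3 hd0.le
  have s4 : (1 / Δt) * ipGa v (tr φ) ≤ (1 / Δt) * (a3 * b2) :=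
    mul_le_mul_of_nonneg_left t4 hΔt0
  have s5 : -((1 / Δt) * ipGa (tr w) η) ≤ (1 / Δt) * (a2 * b3) := by
    rw [← mul_neg]
    exact mul_le_mul_of_nonneg_left t5 hΔt0
  linarith

end Forms

/-- Quasi-optimality (Cea's estimate) for the monolithic formulation with `α = 2/Δt`:
Galerkin orthogonality implies `|||Φ − Φʰ|||_m ≤ 2·|||Φ − Wʰ|||_m` for all `Wʰ ∈ Vʰ`. -/
theorem monolithic_quasi_optimality
    (g Δt : ℝ) (hg : 0 < g) (hΔt : 0 < Δt)
    (Vh : Set ((ℝ × ℝ → ℝ) × (ℝ → ℝ)))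
    (hVreg : ∀ W ∈ Vh, Reg W)
    (hVadd : ∀ W1 ∈ Vh, ∀ W2 ∈ Vh, W1 + W2 ∈ Vh)
    (hVsmul : ∀ (c : ℝ), ∀ W ∈ Vh, c • W ∈ Vh)
    (Φ Φh : (ℝ × ℝ → ℝ) × (ℝ → ℝ))
    (hΦ : Reg Φ) (hΦh : Reg Φh) (hΦhVh : Φh ∈ Vh)
    (hGal : ∀ Wh ∈ Vh,
      Bm g Δt (2 / Δt) Wh.1 Wh.2 (Φ.1 - Φh.1) (Φ.2 - Φh.2) = 0) :
    ∀ Wh ∈ Vh,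
      Real.sqrt (nmM2 g Δt (Φ.1 - Φh.1) (Φ.2 - Φh.2)) ≤
        2 * Real.sqrt (nmM2 g Δt (Φ.1 - Wh.1) (Φ.2 - Wh.2)) := by
  intro Wh hWh
  obtain ⟨hΦd, hΦg, hΦt, hΦb⟩ := hΦ
  obtain ⟨hΦhd, hΦhg, hΦht, hΦhb⟩ := hΦh
  obtain ⟨hWd, hWg, hWt, hWb⟩ := hVreg Wh hWh
  -- regularity of the error E = Φ - Φh
  have hEd : Differentiable ℝ (Φ.1 - Φh.1) := hΦd.sub hΦhd
  have hEg : GradL2 (Φ.1 - Φh.1) := gradL2_sub hΦd hΦhd hΦg hΦhg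
  have hEt : TraceL2 (Φ.1 - Φh.1) := traceL2_sub hΦt hΦht
  have hEb : BdryL2 (Φ.2 - Φh.2) := hΦb.sub hΦhb
  -- regularity of A = Φ - Wh
  have hAd : Differentiable ℝ (Φ.1 - Wh.1) := hΦd.sub hWd
  have hAg : GradL2 (Φ.1 - Wh.1) := gradL2_sub hΦd hWd hΦg hWg
  have hAt : TraceL2 (Φ.1 - Wh.1) := traceL2_sub hΦt hWt
  have hAb : BdryL2 (Φ.2 - Wh.2) := hΦb.sub hWb
  -- regularity of D = Wh - Φh
  have hDd : Differentiable ℝ (Wh.1 - Φh.1) := hWd.sub hΦhd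
  have hDg : GradL2 (Wh.1 - Φh.1) := gradL2_sub hWd hΦhd hWg hΦhg
  have hDt : TraceL2 (Wh.1 - Φh.1) := traceL2_sub hWt hΦht
  have hDb : BdryL2 (Wh.2 - Φh.2) := hWb.sub hΦhb
  -- D = Wh - Φh belongs to Vh
  have hDVh : Wh - Φh ∈ Vh := by
    have h1 : Wh - Φh = Wh + (-1 : ℝ) • Φh := by
      rw [neg_one_smul]; exact sub_eq_add_neg _ _
    rw [h1]
    exact hVadd Wh hWh _ (hVsmul (-1) Φh hΦhVh)
  -- Galerkin orthogonality for D
  have hGalD : Bm g Δt (2 / Δt) (Wh.1 - Φh.1) (Wh.2 - Φh.2) (Φ.1 - Φh.1) (Φ.2 - Φh.2) = 0 :=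
    hGal (Wh - Φh) hDVh
  -- splitting of Bm(E, E) via additivity in the first slot
  have hsplit : Bm g Δt (2 / Δt) (Φ.1 - Φh.1) (Φ.2 - Φh.2) (Φ.1 - Φh.1) (Φ.2 - Φh.2)
      = Bm g Δt (2 / Δt) (Φ.1 - Wh.1) (Φ.2 - Wh.2) (Φ.1 - Φh.1) (Φ.2 - Φh.2)
        + Bm g Δt (2 / Δt) (Wh.1 - Φh.1) (Wh.2 - Φh.2) (Φ.1 - Φh.1) (Φ.2 - Φh.2) := by
    have hsumW : (Φ.1 - Wh.1) + (Wh.1 - Φh.1) = Φ.1 - Φh.1 := sub_add_sub_cancel _ _ _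
    have hsumV : (Φ.2 - Wh.2) + (Wh.2 - Φh.2) = Φ.2 - Φh.2 := sub_add_sub_cancel _ _ _
    have hsumWt : TraceL2 ((Φ.1 - Wh.1) + (Wh.1 - Φh.1)) := by rw [hsumW]; exact hEt
    have hsumVb : BdryL2 ((Φ.2 - Wh.2) + (Wh.2 - Φh.2)) := by rw [hsumV]; exact hEb
    have e1 := bm_expand hg.ne' hΔt.ne' hsumWt hsumVb hEt hEb
    have e2 := bm_expand hg.ne' hΔt.ne' hAt hAb hEt hEb
    have e3 := bm_expand hg.ne' hΔt.ne' hDt hDb hEt hEb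
    rw [hsumW, hsumV] at e1
    rw [e1, e2, e3]
    have eOm : ipOm (Φ.1 - Φh.1) (Φ.1 - Φh.1)
        = ipOm (Φ.1 - Wh.1) (Φ.1 - Φh.1) + ipOm (Wh.1 - Φh.1) (Φ.1 - Φh.1) := by
      have h := ipOm_add_left hAd hDd hAg hDg hEg (φ := Φ.1 - Φh.1)
      rwa [hsumW] at h
    have eTr : tr (Φ.1 - Φh.1) = fun x => tr (Φ.1 - Wh.1) x + tr (Wh.1 - Φh.1) x := by
      funext x
      show (Φ.1 - Φh.1) (x, 1) = (Φ.1 - Wh.1) (x, 1) + (Wh.1 - Φh.1) (x, 1)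
      simp [Pi.sub_apply]
    have eGa1 : ipGa (tr (Φ.1 - Φh.1)) (tr (Φ.1 - Φh.1))
        = ipGa (tr (Φ.1 - Wh.1)) (tr (Φ.1 - Φh.1))
          + ipGa (tr (Wh.1 - Φh.1)) (tr (Φ.1 - Φh.1)) := by
      rw [show ipGa (tr (Φ.1 - Φh.1)) (tr (Φ.1 - Φh.1))
          = ipGa (fun x => tr (Φ.1 - Wh.1) x + tr (Wh.1 - Φh.1) x) (tr (Φ.1 - Φh.1)) by
        rw [← eTr]]
      exact ipGa_add_left hAt hDt hEt
    have eV : (Φ.2 - Φh.2) = fun x => (Φ.2 - Wh.2) x + (Wh.2 - Φh.2) x := by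
      funext x; simp [Pi.sub_apply]
    have eGa2 : ipGa (Φ.2 - Φh.2) (Φ.2 - Φh.2)
        = ipGa (Φ.2 - Wh.2) (Φ.2 - Φh.2) + ipGa (Wh.2 - Φh.2) (Φ.2 - Φh.2) := by
      rw [show ipGa (Φ.2 - Φh.2) (Φ.2 - Φh.2)
          = ipGa (fun x => (Φ.2 - Wh.2) x + (Wh.2 - Φh.2) x) (Φ.2 - Φh.2) by rw [← eV]]
      exact ipGa_add_left hAb hDb hEb
    have eGa3 : ipGa (Φ.2 - Φh.2) (tr (Φ.1 - Φh.1))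
        = ipGa (Φ.2 - Wh.2) (tr (Φ.1 - Φh.1)) + ipGa (Wh.2 - Φh.2) (tr (Φ.1 - Φh.1)) := by
      rw [show ipGa (Φ.2 - Φh.2) (tr (Φ.1 - Φh.1))
          = ipGa (fun x => (Φ.2 - Wh.2) x + (Wh.2 - Φh.2) x) (tr (Φ.1 - Φh.1)) by rw [← eV]]
      exact ipGa_add_left hAb hDb hEt
    have eGa4 : ipGa (tr (Φ.1 - Φh.1)) (Φ.2 - Φh.2)
        = ipGa (tr (Φ.1 - Wh.1)) (Φ.2 - Φh.2) + ipGa (tr (Wh.1 - Φh.1)) (Φ.2 - Φh.2) := by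
      rw [show ipGa (tr (Φ.1 - Φh.1)) (Φ.2 - Φh.2)
          = ipGa (fun x => tr (Φ.1 - Wh.1) x + tr (Wh.1 - Φh.1) x) (Φ.2 - Φh.2) by
        rw [← eTr]]
      exact ipGa_add_left hAt hDt hEb
    rw [eOm, eGa1, eGa2, eGa3, eGa4]
    ring
  -- coercivity and boundedness
  have hcoer : Bm g Δt (2 / Δt) (Φ.1 - Φh.1) (Φ.2 - Φh.2) (Φ.1 - Φh.1) (Φ.2 - Φh.2)
      = nmM2 g Δt (Φ.1 - Φh.1) (Φ.2 - Φh.2) := bm_coercive hg.ne' hΔt.ne' hEt hEb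
  have hbd : Bm g Δt (2 / Δt) (Φ.1 - Wh.1) (Φ.2 - Wh.2) (Φ.1 - Φh.1) (Φ.2 - Φh.2)
      ≤ 2 * Real.sqrt (nmM2 g Δt (Φ.1 - Wh.1) (Φ.2 - Wh.2))
        * Real.sqrt (nmM2 g Δt (Φ.1 - Φh.1) (Φ.2 - Φh.2)) :=
    bm_bound hg hΔt hAg hAt hAb hEg hEt hEb
  set N := Real.sqrt (nmM2 g Δt (Φ.1 - Φh.1) (Φ.2 - Φh.2)) with hN
  set M := Real.sqrt (nmM2 g Δt (Φ.1 - Wh.1) (Φ.2 - Wh.2)) with hM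
  have hN0 : 0 ≤ N := Real.sqrt_nonneg _
  have hM0 : 0 ≤ M := Real.sqrt_nonneg _
  have hN2 : N ^ 2 = nmM2 g Δt (Φ.1 - Φh.1) (Φ.2 - Φh.2) :=
    Real.sq_sqrt (nmM2_nonneg hg hΔt _ _)
  have hkey : N ^ 2 ≤ 2 * M * N := by
    rw [hN2]
    calc nmM2 g Δt (Φ.1 - Φh.1) (Φ.2 - Φh.2)
        = Bm g Δt (2 / Δt) (Φ.1 - Φh.1) (Φ.2 - Φh.2) (Φ.1 - Φh.1) (Φ.2 - Φh.2) := hcoer.symm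
      _ = Bm g Δt (2 / Δt) (Φ.1 - Wh.1) (Φ.2 - Wh.2) (Φ.1 - Φh.1) (Φ.2 - Φh.2) := by
          rw [hsplit, hGalD, add_zero]
      _ ≤ 2 * M * N := hbd
  rcases eq_or_lt_of_le hN0 with h0 | h0
  · rw [← h0]; positivity
  · nlinarith

end
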